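/- Let X = (φ,h): Σ → H²×ℝ be a conformal minimal immersion of a simply connected Riemann surface and let X* = (φ*,h*): Σ → H²×ℝ be its conjugate immersion. Then h* is the real harmonic conjugate of h, and the Hopf differential of φ* satisfies Q_{φ*} = −Q_φ. -/

import Mathlib

noncomputable section
open scoped Classical ENNReal
open Complex MeasureTheory Filter Topology Set

namespace SaddleTowers

/-! ## The hyperbolic plane (Poincaré disk model) and the product `H2 × ℝ` -/

/-- The Poincaré disk, as a subset of `ℂ`. -/
def H2 : Set ℂ := {z : ℂ | ‖z‖ < 1}

/-- The boundary at infinity `∂_∞H²` of the hyperbolic plane. -/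
def bdInf : Set ℂ := {z : ℂ | ‖z‖ = 1}

/-- Inverse hyperbolic cosine. -/
def arcosh (x : ℝ) : ℝ := Real.log (x + Real.sqrt (x ^ 2 - 1))

/-- The hyperbolic distance between two points of the Poincaré disk
(the distance of the metric `4/(1-|z|²)² |dz|²`). -/
def hDist (z w : ℂ) : ℝ :=
  arcosh (1 + 2 * ‖z - w‖ ^ 2 /
    ((1 - ‖z‖ ^ 2) * (1 - ‖w‖ ^ 2)))

/-- The distance of the product metric on `H2 × ℝ`. -/
def pDist (p q : ℂ × ℝ) : ℝ := Real.sqrt (hDist p.1 q.1 ^ 2 + (p.2 - q.2) ^ 2)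

/-- The geodesic segment between two points of the disk, via metric betweenness. -/
def hSeg (p q : ℂ) : Set ℂ := {x ∈ H2 | hDist p x + hDist x q = hDist p q}

/-- Hyperbolic convexity of a subset of the disk. -/
def HypConvex (Ω : Set ℂ) : Prop := Ω ⊆ H2 ∧ ∀ p ∈ Ω, ∀ q ∈ Ω, hSeg p q ⊆ Ω

/-- The complete geodesic through two distinct points, via metric collinearity. -/
def hLine (p q : ℂ) : Set ℂ :=
  {x ∈ H2 | hDist p x + hDist x q = hDist p q ∨ hDist x p + hDist p q = hDist x q ∨
    hDist p q + hDist q x = hDist p x}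

/-- The hyperbolic circle of radius `ℓ` centered at `p`. -/
def hCircle (p : ℂ) (ℓ : ℝ) : Set ℂ := {x ∈ H2 | hDist p x = ℓ}

/-- The open horodisk at the ideal point `ξ` (with `|ξ| = 1`) of Euclidean radius `r`:
the Euclidean disk internally tangent to the unit circle at `ξ`. -/
def horodisk (ξ : ℂ) (r : ℝ) : Set ℂ := Metric.ball (((1 - r : ℝ) : ℂ) * ξ) r

/-- The horocycle at the ideal point `ξ` of Euclidean radius `r`. -/
def horocycleAt (ξ : ℂ) (r : ℝ) : Set ℂ := Metric.sphere (((1 - r : ℝ) : ℂ) * ξ) r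

/-- Hyperbolic distance from a point to a set. -/
def hInfDist (p : ℂ) (S : Set ℂ) : ℝ := sInf (hDist p '' S)

/-- Hyperbolic distance between two sets. -/
def hInfDistSet (S T : Set ℂ) : ℝ := sInf (Set.image2 hDist S T)

/-- A unit-speed parametrisation of a complete geodesic of `H2`. -/
def IsCompleteGeodesic (γ : ℝ → ℂ) : Prop :=
  (∀ t, γ t ∈ H2) ∧ ∀ s t : ℝ, hDist (γ s) (γ t) = |s - t|

/-- The complete geodesic joining two ideal boundary points `ξ η`. -/
def idealGeodSet (ξ η : ℂ) : Set ℂ :=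
  {z ∈ H2 | ∃ γ : ℝ → ℂ, IsCompleteGeodesic γ ∧ Tendsto γ atBot (nhds ξ) ∧
    Tendsto γ atTop (nhds η) ∧ z ∈ Set.range γ}

end SaddleTowers

namespace SaddleTowers

/-- A unit-speed geodesic arc in the disk, parametrised on the (possibly infinite)
open interval `(a, b) ⊆ ℝ`. -/
structure GeodArc where
  γ : ℝ → ℂ
  a : EReal
  b : EReal
  lt : a < b
  mem : ∀ t : ℝ, a < (t : EReal) → (t : EReal) < b → γ t ∈ H2
  unit : ∀ s t : ℝ, a < (s : EReal) → (s : EReal) < b → a < (t : EReal) → (t : EReal) < b →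
    hDist (γ s) (γ t) = |s - t|

namespace GeodArc

/-- The parameter interval of the arc. -/
def params (A : GeodArc) : Set ℝ := {t : ℝ | A.a < (t : EReal) ∧ (t : EReal) < A.b}

/-- The underlying set of the (open) arc. -/
def carrier (A : GeodArc) : Set ℂ := A.γ '' A.params

/-- The hyperbolic length of the portion of the arc lying in the set `S`. -/
def lenIn (A : GeodArc) (S : Set ℂ) : ℝ≥0∞ :=
  MeasureTheory.volume {t ∈ A.params | A.γ t ∈ S}

/-- The total hyperbolic length of the arc. -/
def length (A : GeodArc) : ℝ≥0∞ := MeasureTheory.volume A.params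

/-- The filter of parameters approaching the final endpoint. -/
def endFilter (A : GeodArc) : Filter ℝ :=
  if A.b = ⊤ then Filter.atTop else nhdsWithin A.b.toReal A.params

/-- The filter of parameters approaching the initial endpoint. -/
def startFilter (A : GeodArc) : Filter ℝ :=
  if A.a = ⊥ then Filter.atBot else nhdsWithin A.a.toReal A.params

/-- The arc ends (possibly asymptotically) at the point `p` of the closed disk. -/
def endsAt (A : GeodArc) (p : ℂ) : Prop := Filter.Tendsto A.γ A.endFilter (nhds p)

/-- The arc starts (possibly asymptotically) at the point `p` of the closed disk. -/
def startsAt (A : GeodArc) (p : ℂ) : Prop := Filter.Tendsto A.γ A.startFilter (nhds p)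

end GeodArc

/-- An (open) polygonal domain of the hyperbolic plane with `n` cyclically ordered
vertices (possibly ideal) and `n` geodesic edges, `edge i` running from `vertex i`
to `vertex (i+1)`. -/
structure Polygon (n : ℕ) where
  Ω : Set ℂ
  isOpen : IsOpen Ω
  conn : IsConnected Ω
  subset : Ω ⊆ H2
  vertex : ZMod n → ℂ
  vertexIn : ∀ i, ‖vertex i‖ ≤ 1
  edge : ZMod n → GeodArc
  edge_start : ∀ i, (edge i).startsAt (vertex i)
  edge_end : ∀ i, (edge i).endsAt (vertex (i + 1))
  boundary : frontier Ω ∩ H2 = ((⋃ i, (edge i).carrier) ∪ Set.range vertex) ∩ H2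

namespace Polygon

/-- A vertex lying at the boundary at infinity. -/
def IsIdealVertex {n : ℕ} (P : Polygon n) (i : ZMod n) : Prop :=
  ‖P.vertex i‖ = 1

/-- An ideal polygonal domain: all vertices at infinity. -/
def IsIdeal {n : ℕ} (P : Polygon n) : Prop := ∀ i, P.IsIdealVertex i

/-- A bounded polygonal domain: all vertices interior. -/
def IsBounded {n : ℕ} (P : Polygon n) : Prop := ∀ i, ‖P.vertex i‖ < 1

/-- Following the labelling `A₁,B₁,…,A_k,B_k`, the `A`-edges are the
even-indexed ones (edge `0` is `A₁`). -/
def AedgeSet {n : ℕ} (P : Polygon n) : Set ℂ :=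
  ⋃ i ∈ {i : ZMod n | Even i.val}, (P.edge i).carrier

/-- The union of the `B`-edges (odd-indexed). -/
def BedgeSet {n : ℕ} (P : Polygon n) : Set ℂ :=
  ⋃ i ∈ {i : ZMod n | Odd i.val}, (P.edge i).carrier

/-- The union of the chosen horodisks at the ideal vertices; `r i` is the
Euclidean radius of the horodisk at `vertex i` (irrelevant at interior vertices). -/
def horoUnion {n : ℕ} (P : Polygon n) (r : ZMod n → ℝ) : Set ℂ :=
  ⋃ i ∈ {i : ZMod n | P.IsIdealVertex i}, horodisk (P.vertex i) (r i)

/-- A good choice of horocycles at the ideal vertices: each horodisk meets the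
boundary of `Ω` only along the two adjacent edges, and the horodisks are
pairwise disjoint. -/
def GoodHoroRadii {n : ℕ} (P : Polygon n) (r : ZMod n → ℝ) : Prop :=
  (∀ i, P.IsIdealVertex i → 0 < r i ∧ r i < 1 ∧
      horodisk (P.vertex i) (r i) ∩ frontier P.Ω ⊆
        (P.edge (i - 1)).carrier ∪ (P.edge i).carrier) ∧
  ∀ i j, P.IsIdealVertex i → P.IsIdealVertex j → P.vertex i ≠ P.vertex j →
    Disjoint (horodisk (P.vertex i) (r i)) (horodisk (P.vertex j) (r j))

/-- The truncated length `|Γ(Q)|` of the boundary of the polygon `Q`: the total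
length of its edges outside the horodisk union `U`. -/
def gammaLen {m : ℕ} (Q : Polygon m) (U : Set ℂ) : ℝ≥0∞ :=
  ∑' i : ZMod m, (Q.edge i).lenIn Uᶜ

/-- The truncated length `α(Q)` of the part of `∂Q` running along the `A`-edges
of the ambient polygon `P`. -/
def alphaLenIn {m n : ℕ} (Q : Polygon m) (P : Polygon n) (U : Set ℂ) : ℝ≥0∞ :=
  ∑' i : ZMod m, (Q.edge i).lenIn (Uᶜ ∩ P.AedgeSet)

/-- The truncated length `β(Q)` of the part of `∂Q` running along the `B`-edges
of the ambient polygon `P`. -/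
def betaLenIn {m n : ℕ} (Q : Polygon m) (P : Polygon n) (U : Set ℂ) : ℝ≥0∞ :=
  ∑' i : ZMod m, (Q.edge i).lenIn (Uᶜ ∩ P.BedgeSet)

end Polygon

/-- `Q` is a polygonal domain inscribed in `P`: it is contained in `P` and its
vertices are drawn from the vertices of `P`. -/
def Inscribed {m n : ℕ} (Q : Polygon m) (P : Polygon n) : Prop :=
  Q.Ω ⊆ P.Ω ∧ Set.range Q.vertex ⊆ Set.range P.vertex

/-- The Jenkins-Serrin condition for a convex polygonal domain with edges marked
alternately `A` (even indices) and `B` (odd indices): for some good choice of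
horocycles at the ideal vertices, `α(Ω) = β(Ω)` and
`2α(Q) < |Γ(Q)|`, `2β(Q) < |Γ(Q)|` for every inscribed polygonal domain `Q ≠ Ω`. -/
def IsJSDomain {n : ℕ} (P : Polygon n) : Prop :=
  HypConvex P.Ω ∧ ∃ r : ZMod n → ℝ, P.GoodHoroRadii r ∧
    P.alphaLenIn P (P.horoUnion r) = P.betaLenIn P (P.horoUnion r) ∧
    ∀ (m : ℕ) (Q : Polygon m), Inscribed Q P → Q.Ω ≠ P.Ω →
      2 * Q.alphaLenIn P (P.horoUnion r) < Q.gammaLen (P.horoUnion r) ∧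
      2 * Q.betaLenIn P (P.horoUnion r) < Q.gammaLen (P.horoUnion r)

/-! ## The minimal graph equation in the hyperbolic metric -/

/-- The Euclidean gradient of `u : ℂ → ℝ`, as a complex number. -/
def gradE (u : ℂ → ℝ) (z : ℂ) : ℂ :=
  ⟨fderiv ℝ u z 1, fderiv ℝ u z Complex.I⟩

/-- The conformal factor `λ(z) = 2/(1-|z|²)` of the hyperbolic metric. -/
def lam (z : ℂ) : ℝ := 2 / (1 - ‖z‖ ^ 2)

/-- The (Euclidean expression of the) normalized gradient field
`∇u/√(1+|∇u|²)`, all hyperbolic quantities rewritten in Euclidean terms. -/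
def Wfield (u : ℂ → ℝ) (z : ℂ) : ℂ :=
  (Real.sqrt (1 + ‖gradE u z‖ ^ 2 / lam z ^ 2))⁻¹ • gradE u z

/-- The hyperbolic norm of the normalized gradient of `u` (close to `1` where the
gradient of `u` is large). -/
def scalarW (u : ℂ → ℝ) (z : ℂ) : ℝ :=
  ‖gradE u z‖ / (lam z * Real.sqrt (1 + ‖gradE u z‖ ^ 2 / lam z ^ 2))

/-- Euclidean divergence of a vector field `V : ℂ → ℂ`. -/
def divE (V : ℂ → ℂ) (z : ℂ) : ℝ :=
  fderiv ℝ (fun w => (V w).re) z 1 + fderiv ℝ (fun w => (V w).im) z Complex.I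

/-- `u` satisfies the minimal graph equation `div(∇u/√(1+|∇u|²)) = 0` on `Ω`,
all terms calculated in the hyperbolic metric of the Poincaré disk.  (For the
conformal metric `λ²|dz|²` this equation is equivalent to the Euclidean equation
`div₀(∇₀u/√(1+λ⁻²|∇₀u|²)) = 0`.) -/
def MinimalGraphOn (u : ℂ → ℝ) (Ω : Set ℂ) : Prop :=
  ContDiffOn ℝ 2 u Ω ∧ ∀ z ∈ Ω, divE (Wfield u) z = 0

/-- The vertical graph of `u` over `Ω`, as a subset of `H2 × ℝ`. -/
def vGraph (u : ℂ → ℝ) (Ω : Set ℂ) : Set (ℂ × ℝ) := {p : ℂ × ℝ | p.1 ∈ Ω ∧ p.2 = u p.1}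

/-- `u` tends to `+∞` at every point of `A` from within `Ω`. -/
def BdryTop (u : ℂ → ℝ) (Ω A : Set ℂ) : Prop :=
  ∀ p ∈ A, Filter.Tendsto u (nhdsWithin p Ω) Filter.atTop

/-- `u` tends to `-∞` at every point of `A` from within `Ω`. -/
def BdryBot (u : ℂ → ℝ) (Ω A : Set ℂ) : Prop :=
  ∀ p ∈ A, Filter.Tendsto u (nhdsWithin p Ω) Filter.atBot

/-- `u` is a solution of the Jenkins-Serrin problem on the polygon `P`:
it solves the minimal graph equation with boundary values `+∞` on the `A`-edges
(even indices) and `-∞` on the `B`-edges (odd indices). -/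
def IsJSSolution {n : ℕ} (P : Polygon n) (u : ℂ → ℝ) : Prop :=
  MinimalGraphOn u P.Ω ∧
    (∀ i : ZMod n, Even i.val → BdryTop u P.Ω (P.edge i).carrier) ∧
    (∀ i : ZMod n, Odd i.val → BdryBot u P.Ω (P.edge i).carrier)

/-! ## Conformal minimal immersions in `H2 × ℝ` and conjugation -/

/-- Wirtinger derivative `∂f/∂z`. -/
def wD (f : ℂ → ℂ) (z : ℂ) : ℂ :=
  (fderiv ℝ f z 1 - Complex.I * fderiv ℝ f z Complex.I) / 2

/-- Wirtinger derivative `∂f/∂z̄`. -/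
def wDbar (f : ℂ → ℂ) (z : ℂ) : ℂ :=
  (fderiv ℝ f z 1 + Complex.I * fderiv ℝ f z Complex.I) / 2

/-- `∂h/∂z` for a real valued function. -/
def hzD (h : ℂ → ℝ) (z : ℂ) : ℂ := wD (fun w => ((h w : ℝ) : ℂ)) z

/-- Euclidean Laplacian of a real valued function on `ℂ`. -/
def lapl (h : ℂ → ℝ) (z : ℂ) : ℝ :=
  fderiv ℝ (fun w => fderiv ℝ h w 1) z 1 +
    fderiv ℝ (fun w => fderiv ℝ h w Complex.I) z Complex.I

/-- The tension field (harmonic map operator) of a map `φ` into the hyperbolic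
disk: `φ` is harmonic iff `φ_{zz̄} + (2φ̄/(1-|φ|²)) φ_z φ_z̄ = 0`. -/
def tensionD (φ : ℂ → ℂ) (z : ℂ) : ℂ :=
  wDbar (fun w => wD φ w) z +
    (2 * (starRingEnd ℂ) (φ z) / (1 - (‖φ z‖ : ℂ) ^ 2)) * wD φ z * wDbar φ z

/-- The coefficient of the Hopf differential `Q_φ = (λ∘φ)² φ_z (φ_z̄)ᶜ dz²` of a
map `φ` into the hyperbolic disk. -/
def hopf (φ : ℂ → ℂ) (z : ℂ) : ℂ :=
  ((lam (φ z) : ℝ) : ℂ) ^ 2 * wD φ z * (starRingEnd ℂ) (wDbar φ z)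

/-- The conformal factor of the metric induced on the parameter domain by the
immersion `(φ,h)` into `H2 × ℝ`. -/
def rhoSq (φ : ℂ → ℂ) (h : ℂ → ℝ) (z : ℂ) : ℝ :=
  lam (φ z) ^ 2 * (‖wD φ z‖ ^ 2 + ‖wDbar φ z‖ ^ 2) +
    2 * ‖hzD h z‖ ^ 2

/-- A conformal minimal immersion `X = (φ, h) : U → H2 × ℝ`: conformality plus
harmonicity of the height `h` and of the horizontal map `φ` (which for a
conformal immersion is equivalent to minimality). -/
structure CMI (U : Set ℂ) where
  φ : ℂ → ℂ
  h : ℂ → ℝ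
  opn : IsOpen U
  mapsTo : ∀ z ∈ U, φ z ∈ H2
  smooth_φ : ContDiffOn ℝ (⊤ : ℕ∞) φ U
  smooth_h : ContDiffOn ℝ (⊤ : ℕ∞) h U
  immersion : ∀ z ∈ U, 0 < rhoSq φ h z
  conformal : ∀ z ∈ U, hopf φ z + (hzD h z) ^ 2 = 0
  minimal_h : ∀ z ∈ U, lapl h z = 0
  minimal_φ : ∀ z ∈ U, tensionD φ z = 0

namespace CMI

variable {U : Set ℂ}

/-- The immersion as a map into `ℂ × ℝ`. -/
def X (F : CMI U) : ℂ → ℂ × ℝ := fun z => (F.φ z, F.h z)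

/-- The image surface. -/
def image (F : CMI U) : Set (ℂ × ℝ) := F.X '' U

/-- The differential of the immersion, applied to the parameter vector `v ∈ ℂ`. -/
def dX (F : CMI U) (z : ℂ) (v : ℂ) : ℂ × ℝ := (fderiv ℝ F.φ z v, fderiv ℝ F.h z v)

end CMI

/-- The Riemannian product metric of `H2 × ℝ` evaluated at the point with
horizontal coordinate `w`, on the tangent vectors `v u : ℂ × ℝ`. -/
def met (w : ℂ) (v u : ℂ × ℝ) : ℝ :=
  lam w ^ 2 * (v.1 * (starRingEnd ℂ) u.1).re + v.2 * u.2

/-- Coordinates of a tangent vector in the orthonormal frame at a point with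
horizontal coordinate `w`. -/
def toF (w : ℂ) (v : ℂ × ℝ) : Fin 3 → ℝ := ![lam w * v.1.re, lam w * v.1.im, v.2]

/-- The tangent vector with the given orthonormal-frame coordinates. -/
def fromF (w : ℂ) (a : Fin 3 → ℝ) : ℂ × ℝ := (⟨a 0 / lam w, a 1 / lam w⟩, a 2)

/-- Cross product on frame coordinates. -/
def cross3 (a b : Fin 3 → ℝ) : Fin 3 → ℝ :=
  ![a 1 * b 2 - a 2 * b 1, a 2 * b 0 - a 0 * b 2, a 0 * b 1 - a 1 * b 0]

namespace CMI

variable {U : Set ℂ}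

/-- The induced unit normal field of the immersion. -/
def normalVec (F : CMI U) (z : ℂ) : ℂ × ℝ :=
  let n := cross3 (toF (F.φ z) (F.dX z 1)) (toF (F.φ z) (F.dX z Complex.I))
  fromF (F.φ z) (fun j => n j / Real.sqrt (n 0 ^ 2 + n 1 ^ 2 + n 2 ^ 2))

/-- The angle function `ν = ⟨N, ∂/∂t⟩`. -/
def nu (F : CMI U) (z : ℂ) : ℝ := (F.normalVec z).2

/-- The parameter vector field `T` with `dX(T)` the projection of `∂/∂t` onto the
tangent bundle of the surface. -/
def Tfield (F : CMI U) (z : ℂ) : ℂ :=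
  (((fderiv ℝ F.h z 1 : ℝ) : ℂ) + ((fderiv ℝ F.h z Complex.I : ℝ) : ℂ) * Complex.I) /
    ((rhoSq F.φ F.h z : ℝ) : ℂ)

/-- The ambient covariant second derivative `∇_{dX(v)} dX(w)` of the immersion
(the connection of the product of the conformal disk metric with `ℝ`). -/
def covDD (F : CMI U) (z : ℂ) (v w : ℂ) : ℂ × ℝ :=
  (fderiv ℝ (fun y => fderiv ℝ F.φ y w) z v +
      (2 * (starRingEnd ℂ) (F.φ z) / (1 - (‖F.φ z‖ : ℂ) ^ 2)) *
        fderiv ℝ F.φ z v * fderiv ℝ F.φ z w,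
    fderiv ℝ (fun y => fderiv ℝ F.h y w) z v)

/-- The second fundamental form of the immersion on parameter vectors `v w`. -/
def sff (F : CMI U) (z : ℂ) (v w : ℂ) : ℝ :=
  met (F.φ z) (F.covDD z v w) (F.normalVec z)

/-- The symmetric operator on the parameter domain induced by the shape operator
of the immersed surface (using that the induced metric is `ρ²·euclidean`). -/
def shapeOp (F : CMI U) (z : ℂ) (v : ℂ) : ℂ :=
  (((F.sff z v 1 : ℝ) : ℂ) + ((F.sff z v Complex.I : ℝ) : ℂ) * Complex.I) /
    ((rhoSq F.φ F.h z : ℝ) : ℂ)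

/-- The total intrinsic curvature `∫ K dA` of the immersion: for the induced
conformal metric `ρ²|dz|²` one has `K dA = -½ Δ(log ρ²) dx dy`. -/
def totalCurv (F : CMI U) : ℝ :=
  -(1 / 2) * ∫ z in U, lapl (fun w => Real.log (rhoSq F.φ F.h w)) z

end CMI

/-- `G` is the conjugate immersion of `F` in the sense of Daniel: same induced
metric, shape operator `S* = J∘S`, and `∂/∂t = dX*(JT) + ν N*`. -/
def IsConjugatePair {U : Set ℂ} (F G : CMI U) : Prop :=
  (∀ z ∈ U, rhoSq G.φ G.h z = rhoSq F.φ F.h z) ∧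
  (∀ z ∈ U, ∀ v : ℂ, G.shapeOp z v = Complex.I * F.shapeOp z v) ∧
  (∀ z ∈ U, G.dX z (Complex.I * F.Tfield z) + F.nu z • G.normalVec z = ((0 : ℂ), (1 : ℝ)))


/-! ## Isometries, symmetries and global minimal surfaces in `H2 × ℝ` -/

/-- The region `H2 × ℝ` inside the ambient `ℂ × ℝ`. -/
def ambient : Set (ℂ × ℝ) := H2 ×ˢ (Set.univ : Set ℝ)

/-- An isometry of `H2 × ℝ`. -/
def IsIsomH2R (f : ℂ × ℝ → ℂ × ℝ) : Prop :=
  Set.BijOn f ambient ambient ∧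
    ∀ p ∈ ambient, ∀ q ∈ ambient, pDist (f p) (f q) = pDist p q

/-- The vertical translation by `c`. -/
def vT (c : ℝ) : ℂ × ℝ → ℂ × ℝ := fun p => (p.1, p.2 + c)

/-- Invariance under the vertical translation by `c`. -/
def PeriodicBy (S : Set (ℂ × ℝ)) (c : ℝ) : Prop := vT c '' S = S

/-- Reflection across the horizontal slice `H2 × {t₀}`. -/
def reflH (t₀ : ℝ) : ℂ × ℝ → ℂ × ℝ := fun p => (p.1, 2 * t₀ - p.2)

/-- A minimal surface in `H2 × ℝ`: a set which is locally the image of a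
conformal minimal immersion. -/
def IsMinimalSurface (S : Set (ℂ × ℝ)) : Prop :=
  S ⊆ ambient ∧ ∀ p ∈ S, ∃ (U : Set ℂ) (F : CMI U) (W : Set (ℂ × ℝ)),
    W ∈ nhds p ∧ S ∩ W = F.image ∩ W ∧ p ∈ F.image

/-- An embedded minimal surface: around each point it is exactly the image of an
injective conformal minimal immersion. -/
def IsEmbeddedMinimalSurface (S : Set (ℂ × ℝ)) : Prop :=
  S ⊆ ambient ∧ ∀ p ∈ S, ∃ (U : Set ℂ) (F : CMI U) (W : Set (ℂ × ℝ)),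
    W ∈ nhds p ∧ S ∩ W = F.image ∧ Set.InjOn F.X U ∧ p ∈ F.image

/-- Properness (for subsets of `H2 × ℝ`): the surface is closed in `H2 × ℝ`. -/
def ProperlyEmbeddedMinimalSurface (S : Set (ℂ × ℝ)) : Prop :=
  IsEmbeddedMinimalSurface S ∧ ∃ C : Set (ℂ × ℝ), IsClosed C ∧ S = C ∩ ambient

/-- A topological space is a sphere with `m` punctures (genus zero, `m` ends). -/
def IsSphereMinusPoints (X : Type) [TopologicalSpace X] (m : ℕ) : Prop :=
  ∃ P : Finset (EuclideanSpace ℝ (Fin 3)), P.card = m ∧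
    (↑P : Set (EuclideanSpace ℝ (Fin 3))) ⊆ Metric.sphere 0 1 ∧
    Nonempty (X ≃ₜ
      ((Metric.sphere (0 : EuclideanSpace ℝ (Fin 3)) 1 \ ↑P : Set (EuclideanSpace ℝ (Fin 3)))))

/-- Projection of `H2 × ℝ` to the quotient of `H2 × ℝ` by the vertical
translation `vT c`. -/
def projQ (c : ℝ) (p : ℂ × ℝ) : ℂ × AddCircle c := (p.1, (p.2 : AddCircle c))

/-- The half vertical geodesic plane over the geodesic ray `γ([0,∞))`. -/
def halfGeodPlane (γ : ℝ → ℂ) : Set (ℂ × ℝ) := (γ '' Set.Ici (0 : ℝ)) ×ˢ (Set.univ : Set ℝ)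

/-- The vertical geodesic plane over the complete geodesic `γ`. -/
def vertGeodPlane (γ : ℝ → ℂ) : Set (ℂ × ℝ) := Set.range γ ×ˢ (Set.univ : Set ℝ)

/-- Two sets of `H2 × ℝ` are asymptotic: away from a big hyperbolic ball around
the origin they lie within arbitrarily small distance of each other. -/
def AsymptoticSets (E P : Set (ℂ × ℝ)) : Prop :=
  ∀ ε > 0, ∃ R : ℝ, (∀ p ∈ E, R < hDist p.1 0 → ∃ q ∈ P, pDist p q < ε) ∧
    ∀ q ∈ P, R < hDist q.1 0 → ∃ p ∈ E, pDist p q < ε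

/-- A surface invariant by `vT c` has `m` vertical Scherk-type ends in the
quotient by `vT c`: away from a cylinder over a compact set of `H2` it splits
into `m` disjoint pieces, each invariant and asymptotic to (the quotient of)
half a vertical geodesic plane. -/
def HasScherkEnds (S : Set (ℂ × ℝ)) (c : ℝ) (m : ℕ) : Prop :=
  ∃ (γ : Fin m → ℝ → ℂ) (E : Fin m → Set (ℂ × ℝ)),
    (∀ i, IsCompleteGeodesic (γ i)) ∧ (∀ i, E i ⊆ S) ∧ (∀ i, vT c '' E i = E i) ∧
    Pairwise (Function.onFun Disjoint E) ∧
    (∀ i, AsymptoticSets (E i) (halfGeodPlane (γ i))) ∧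
    ∃ K : Set ℂ, IsCompact K ∧ S \ (⋃ i, E i) ⊆ K ×ˢ (Set.univ : Set ℝ)

/-- A surface has `m` ends, each asymptotic to a vertical geodesic plane. -/
def HasVerticalPlanarEnds (S : Set (ℂ × ℝ)) (m : ℕ) : Prop :=
  ∃ (γ : Fin m → ℝ → ℂ) (E : Fin m → Set (ℂ × ℝ)),
    (∀ i, IsCompleteGeodesic (γ i)) ∧ (∀ i, E i ⊆ S) ∧
    Pairwise (Function.onFun Disjoint E) ∧
    (∀ i, AsymptoticSets (E i) (vertGeodPlane (γ i))) ∧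
    ∃ K : Set (ℂ × ℝ), IsCompact K ∧ S \ (⋃ i, E i) ⊆ K

/-- The quotient surface admits a global conformal minimal parametrisation of
total intrinsic curvature `κ` (total curvature of a fundamental domain). -/
def QuotientTotalCurvature (S : Set (ℂ × ℝ)) (c : ℝ) (κ : ℝ) : Prop :=
  ∃ (U : Set ℂ) (F : CMI U), Set.InjOn (projQ c ∘ F.X) U ∧
    projQ c '' F.image = projQ c '' S ∧ F.totalCurv = κ

/-- A surface is globally parametrised with total intrinsic curvature `κ`. -/
def TotalCurvature (S : Set (ℂ × ℝ)) (κ : ℝ) : Prop :=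
  ∃ (U : Set ℂ) (F : CMI U), Set.InjOn F.X U ∧ F.image = S ∧ F.totalCurv = κ

/-- A Saddle Tower in `H2 × ℝ`: a properly embedded singly periodic minimal
surface, invariant by the vertical translation by `c`, with total intrinsic
curvature `4π(1-k)`, genus zero and `2k` vertical Scherk-type ends in the
quotient by the translation. -/
def IsSaddleTower (k : ℕ) (c : ℝ) (S : Set (ℂ × ℝ)) : Prop :=
  ProperlyEmbeddedMinimalSurface S ∧ PeriodicBy S c ∧
    IsSphereMinusPoints (projQ c '' S) (2 * k) ∧
    HasScherkEnds S c (2 * k) ∧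
    QuotientTotalCurvature S c (4 * Real.pi * (1 - (k : ℝ)))

/-- Convergence of a sequence of surfaces to a surface, uniformly on compact
subsets of the ambient space. -/
def LocalLimit (S : ℕ → Set (ℂ × ℝ)) (M : Set (ℂ × ℝ)) : Prop :=
  ∀ ε > 0, ∀ K : Set (ℂ × ℝ), IsCompact K →
    ∀ᶠ n in Filter.atTop,
      S n ∩ K ⊆ Metric.thickening ε M ∧ M ∩ K ⊆ Metric.thickening ε (S n)

/-- A vertical minimal graph (as a subset of `H2 × ℝ`). -/
def IsVerticalGraph (S : Set (ℂ × ℝ)) : Prop :=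
  ∃ (Ω : Set ℂ) (u : ℂ → ℝ), Ω ⊆ H2 ∧ MinimalGraphOn u Ω ∧ S = vGraph u Ω


/-! ## Symmetries, semi-ideal domains, and further notions -/

/-- The reflection of `H2 × ℝ` across the vertical geodesic plane over the
complete geodesic `γ`: the involutive isometry whose fixed point set is exactly
that vertical plane. -/
def IsReflVertPlane (f : ℂ × ℝ → ℂ × ℝ) (γ : ℝ → ℂ) : Prop :=
  IsIsomH2R f ∧ (∀ p ∈ ambient, f (f p) = p) ∧
    {p ∈ ambient | f p = p} = vertGeodPlane γ

/-- The rotation by angle `π` of `H2 × ℝ` about the horizontal geodesic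
`γ × {t₀}`: the involutive isometry whose fixed point set is exactly that
horizontal geodesic. -/
def IsRotHorGeod (f : ℂ × ℝ → ℂ × ℝ) (γ : ℝ → ℂ) (t₀ : ℝ) : Prop :=
  IsIsomH2R f ∧ (∀ p ∈ ambient, f (f p) = p) ∧
    {p ∈ ambient | f p = p} = Set.range γ ×ˢ ({t₀} : Set ℝ)

/-- The reflection of `H2 × ℝ` across the horizontal plane `H2 × {t₀}`. -/
def IsReflHorPlane (f : ℂ × ℝ → ℂ × ℝ) (t₀ : ℝ) : Prop :=
  IsIsomH2R f ∧ (∀ p ∈ ambient, f (f p) = p) ∧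
    {p ∈ ambient | f p = p} = H2 ×ˢ ({t₀} : Set ℝ)

/-- The rotation by angle `π` of `H2 × ℝ` about the vertical straight line
`{q} × ℝ`. -/
def IsRotVertLine (f : ℂ × ℝ → ℂ × ℝ) (q : ℂ) : Prop :=
  IsIsomH2R f ∧ (∀ p ∈ ambient, f (f p) = p) ∧
    {p ∈ ambient | f p = p} = ({q} : Set ℂ) ×ˢ (Set.univ : Set ℝ)

/-- A curve `c` (defined on the parameter set `I`) is a line of curvature of the
immersion `F`: its velocity is everywhere an eigenvector of the shape operator. -/
def IsCurvatureLine {U : Set ℂ} (F : CMI U) (c : ℝ → ℂ) (I : Set ℝ) : Prop :=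
  (∀ t ∈ I, c t ∈ U) ∧ ∀ t ∈ I, deriv c t ≠ 0 ∧
    ∃ κ : ℝ, F.shapeOp (c t) (deriv c t) = ((κ : ℝ) : ℂ) * deriv c t

/-- A semi-ideal polygon (in the labelling used here the odd vertices
`p_{2i-1}` of the paper correspond to even indices): the vertices alternate
between interior points and ideal points. -/
def IsSemiIdeal {k : ℕ} (P : Polygon (2 * k)) : Prop :=
  ∀ i : ZMod (2 * k), (Even i.val → ‖P.vertex i‖ < 1) ∧
    (Odd i.val → ‖P.vertex i‖ = 1)

/-- Condition (★) for a semi-ideal polygon: at each ideal vertex there is a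
small horocycle, meeting `∂Ω` only along the two adjacent edges, which is
equidistant from the two neighbouring interior vertices. -/
def StarCond {k : ℕ} (P : Polygon (2 * k)) : Prop :=
  ∀ i : ZMod (2 * k), Odd i.val → ∃ ρ : ℝ, 0 < ρ ∧ ρ < 1 ∧
    horodisk (P.vertex i) ρ ∩ frontier P.Ω ⊆
      (P.edge (i - 1)).carrier ∪ (P.edge i).carrier ∧
    hInfDist (P.vertex (i - 1)) (horocycleAt (P.vertex i) ρ) =
      hInfDist (P.vertex (i + 1)) (horocycleAt (P.vertex i) ρ)

/-- Condition (★) with a chosen family of horocycles realising the common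
distance `ℓ₀` at every ideal vertex. -/
def StarCondWith {k : ℕ} (P : Polygon (2 * k)) (ℓ₀ : ℝ) (ρ : ZMod (2 * k) → ℝ) : Prop :=
  ∀ i : ZMod (2 * k), Odd i.val → 0 < ρ i ∧ ρ i < 1 ∧
    horodisk (P.vertex i) (ρ i) ∩ frontier P.Ω ⊆
      (P.edge (i - 1)).carrier ∪ (P.edge i).carrier ∧
    hInfDist (P.vertex (i - 1)) (horocycleAt (P.vertex i) (ρ i)) = ℓ₀ ∧
    hInfDist (P.vertex (i + 1)) (horocycleAt (P.vertex i) (ρ i)) = ℓ₀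

/-- Local convexity of the domain `Ω` at a boundary point `p` (a "convexity
point" of the boundary curve with respect to `Ω`). -/
def LocallyConvexAt (Ω : Set ℂ) (p : ℂ) : Prop :=
  ∃ ε > 0, ∀ x ∈ Ω ∩ Metric.ball p ε, ∀ y ∈ Ω ∩ Metric.ball p ε, hSeg x y ⊆ Ω

/-- `C` is a horizontal curvature line of symmetry of the surface `S` at height
`t₀`: it lies in the slice `H2 × {t₀}` and the surface extended by the Schwarz
reflection across this slice is again a minimal surface. -/
def HorSymCurve (S C : Set (ℂ × ℝ)) (t₀ : ℝ) : Prop :=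
  C.Nonempty ∧ IsConnected C ∧ C ⊆ {p : ℂ × ℝ | p.2 = t₀} ∧
    IsMinimalSurface (S ∪ C ∪ reflH t₀ '' S)

/-- The (unoriented Euclidean, hence hyperbolic) angle between two nonzero
vectors of `ℂ`. -/
def vangle (u v : ℂ) : ℝ :=
  Real.arccos ((u * (starRingEnd ℂ) v).re / (‖u‖ * ‖v‖))

/-- The interior angle of a polygon at the vertex `vertex i`, measured between
the incoming edge `edge (i-1)` and the outgoing edge `edge i` (hyperbolic
angles agree with Euclidean ones in the conformal disk model). -/
def Polygon.interiorAngle {n : ℕ} (P : Polygon n) (i : ZMod n) : ℝ :=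
  vangle (-(deriv (P.edge (i - 1)).γ ((P.edge (i - 1)).b.toReal)))
    (deriv (P.edge i).γ ((P.edge i).a.toReal))

/-- The hyperbolic geodesic which is the Euclidean diameter of the disk in the
direction `e^{iα}`. -/
def diam (α : ℝ) : Set ℂ :=
  {z : ℂ | ∃ s : ℝ, -1 < s ∧ s < 1 ∧ z = ((s : ℝ) : ℂ) * Complex.exp (Complex.I * (α : ℂ))}

/-- A divergence line for a sequence of solutions of the minimal graph equation
on `Ω`: a geodesic arc in `Ω` along which the normalized gradients become
vertical (hyperbolic norm of `W` converging to `1`). -/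
def IsDivergenceLine (u : ℕ → ℂ → ℝ) (Ω : Set ℂ) (L : GeodArc) : Prop :=
  L.carrier.Nonempty ∧ L.carrier ⊆ Ω ∧
    ∀ p ∈ L.carrier, Filter.Tendsto (fun n => scalarW (u n) p) Filter.atTop (nhds 1)



section ConjugateAux

private lemma mk_mul (x y u v : ℝ) :
    ((x : ℂ) + y * Complex.I) * (u + v * Complex.I)
      = ((x * u - y * v : ℝ) : ℂ) + ((x * v + y * u : ℝ) : ℂ) * Complex.I := by
  push_cast
  linear_combination (y * v : ℂ) * Complex.I_mul_I

private lemma mk_eq_mk {x y x' y' : ℝ}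
    (h : (x : ℂ) + y * Complex.I = (x' : ℂ) + y' * Complex.I) : x = x' ∧ y = y' := by
  have h1 := congrArg Complex.re h
  have h2 := congrArg Complex.im h
  simp at h1 h2
  exact ⟨h1, h2⟩

private lemma clm_decomp {E : Type*} [NormedAddCommGroup E] [NormedSpace ℝ E]
    (L : ℂ →L[ℝ] E) (x y : ℝ) :
    L ((x : ℂ) + (y : ℂ) * Complex.I) = x • L 1 + y • L Complex.I := by
  rw [show ((x : ℝ) : ℂ) = x • (1 : ℂ) by simp [Complex.real_smul],
    show ((y : ℝ) : ℂ) * Complex.I = y • Complex.I by simp [Complex.real_smul],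
    map_add, L.map_smul, L.map_smul]

private lemma fderiv_ofReal_comp {h : ℂ → ℝ} {z : ℂ} (hd : DifferentiableAt ℝ h z) (v : ℂ) :
    fderiv ℝ (fun w => ((h w : ℝ) : ℂ)) z v = ((fderiv ℝ h z v : ℝ) : ℂ) := by
  have : fderiv ℝ (fun w => ((h w : ℝ) : ℂ)) z = Complex.ofRealCLM.comp (fderiv ℝ h z) :=
    (Complex.ofRealCLM.hasFDerivAt.comp z hd.hasFDerivAt).fderiv
  rw [this]
  rfl

private lemma conf_extract (l x y u v a b : ℝ)
    (h : ((l : ℝ) : ℂ) ^ 2 * ((x : ℂ) + y * Complex.I) * ((u : ℂ) + v * Complex.I)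
        + ((a : ℂ) + b * Complex.I) ^ 2 = 0) :
    l ^ 2 * (x * u - y * v) + (a ^ 2 - b ^ 2) = 0 ∧
      l ^ 2 * (x * v + y * u) + 2 * (a * b) = 0 := by
  have h' : ((l ^ 2 * (x * u - y * v) + (a ^ 2 - b ^ 2) : ℝ) : ℂ)
      + ((l ^ 2 * (x * v + y * u) + 2 * (a * b) : ℝ) : ℂ) * Complex.I
      = ((0 : ℝ) : ℂ) + ((0 : ℝ) : ℂ) * Complex.I := by
    push_cast
    linear_combination h - (((l : ℝ) : ℂ) ^ 2 * (y : ℂ) * (v : ℂ) + ((b : ℝ) : ℂ) ^ 2)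
      * Complex.I_mul_I
  exact mk_eq_mk h'

private lemma cmi_key {U : Set ℂ} (K : CMI U) {z : ℂ} (hz : z ∈ U) :
    K.dX z (K.Tfield z) + K.nu z • K.normalVec z = ((0 : ℂ), (1 : ℝ)) ∧
      ∀ (c : ℝ) (v : ℂ), K.dX z v = c • K.normalVec z → v = 0 := by
  classical
  have hd : DifferentiableAt ℝ K.h z :=
    (K.smooth_h.differentiableOn (by simp)).differentiableAt
      (K.opn.mem_nhds hz)
  obtain ⟨l, hl, hlE⟩ : ∃ l : ℝ, 0 < l ∧ lam (K.φ z) = l := by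
    refine ⟨lam (K.φ z), ?_, rfl⟩
    have habs : ‖K.φ z‖ < 1 := K.mapsTo z hz
    have habs0 : 0 ≤ ‖K.φ z‖ := norm_nonneg _
    rw [lam]
    apply div_pos two_pos
    nlinarith
  obtain ⟨r, hr, hrE⟩ : ∃ r : ℝ, 0 < r ∧ rhoSq K.φ K.h z = r :=
    ⟨_, K.immersion z hz, rfl⟩
  obtain ⟨p1, p2, hP⟩ : ∃ a b : ℝ, fderiv ℝ K.φ z 1 = (a : ℂ) + (b : ℂ) * Complex.I :=
    ⟨_, _, (Complex.re_add_im _).symm⟩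
  obtain ⟨q1, q2, hQ⟩ : ∃ a b : ℝ, fderiv ℝ K.φ z Complex.I = (a : ℂ) + (b : ℂ) * Complex.I :=
    ⟨_, _, (Complex.re_add_im _).symm⟩
  obtain ⟨A, hA⟩ : ∃ a : ℝ, fderiv ℝ K.h z 1 = a := ⟨_, rfl⟩
  obtain ⟨B, hB⟩ : ∃ a : ℝ, fderiv ℝ K.h z Complex.I = a := ⟨_, rfl⟩
  -- basic derivative computations
  have hhz : hzD K.h z = ((A / 2 : ℝ) : ℂ) + ((-(B / 2) : ℝ) : ℂ) * Complex.I := by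
    rw [hzD, wD, fderiv_ofReal_comp hd 1, fderiv_ofReal_comp hd Complex.I, hA, hB]
    push_cast; ring
  have hw : wD K.φ z = (((p1 + q2) / 2 : ℝ) : ℂ) + (((p2 - q1) / 2 : ℝ) : ℂ) * Complex.I := by
    rw [wD, hP, hQ]; push_cast
    linear_combination (-(q2 : ℂ) / 2) * Complex.I_mul_I
  have hwb : wDbar K.φ z
      = (((p1 - q2) / 2 : ℝ) : ℂ) + (((p2 + q1) / 2 : ℝ) : ℂ) * Complex.I := by
    rw [wDbar, hP, hQ]; push_cast
    linear_combination ((q2 : ℂ) / 2) * Complex.I_mul_I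
  have hwbc : (starRingEnd ℂ) (wDbar K.φ z)
      = (((p1 - q2) / 2 : ℝ) : ℂ) + ((-((p2 + q1) / 2) : ℝ) : ℂ) * Complex.I := by
    rw [hwb]
    simp only [map_add, map_mul, Complex.conj_ofReal, Complex.conj_I]
    push_cast; ring
  -- the conformality relations in real coordinates
  have hconf := K.conformal z hz
  rw [hopf, hlE, hw, hwbc, hhz] at hconf
  obtain ⟨hR1', hR2'⟩ := conf_extract l _ _ _ _ _ _ hconf
  have hR1 : l ^ 2 * (p1 ^ 2 + p2 ^ 2 - q1 ^ 2 - q2 ^ 2) + A ^ 2 - B ^ 2 = 0 := by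
    linear_combination 4 * hR1'
  have hR2 : l ^ 2 * (p1 * q1 + p2 * q2) + A * B = 0 := by
    linear_combination -2 * hR2'
  -- the conformal factor in real coordinates
  have habs_sq : ∀ x y : ℝ, ‖(x : ℂ) + (y : ℂ) * Complex.I‖ ^ 2 = x ^ 2 + y ^ 2 := by
    intro x y
    rw [Complex.sq_norm, Complex.normSq_apply]
    simp; ring
  have hM : r = (l ^ 2 * (p1 ^ 2 + p2 ^ 2 + q1 ^ 2 + q2 ^ 2) + (A ^ 2 + B ^ 2)) / 2 := by
    rw [← hrE, rhoSq, hlE, hw, hwb, hhz, habs_sq, habs_sq, habs_sq]; ring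
  have hM1 : r = l ^ 2 * (p1 ^ 2 + p2 ^ 2) + A ^ 2 := by
    linear_combination hM - (1 / 2) * hR1
  -- the normal vector in coordinates
  have key_s : (l * p2 * B - A * (l * q2)) ^ 2 + (A * (l * q1) - l * p1 * B) ^ 2 + (l * p1 * (l * q2) - l * p2 * (l * q1)) ^ 2 = r ^ 2 := by
    linear_combination (-(r + (l ^ 2 * (p1 ^ 2 + p2 ^ 2) + A ^ 2))) * hM1
      + (-(l ^ 2 * (p1 ^ 2 + p2 ^ 2) + A ^ 2)) * hR1
      + (-(l ^ 2 * (p1 * q1 + p2 * q2) + A * B)) * hR2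
  have hN : K.normalVec z
      = ((((l * p2 * B - A * (l * q2)) / (r * l) : ℝ) : ℂ) + (((A * (l * q1) - l * p1 * B) / (r * l) : ℝ) : ℂ) * Complex.I, (l * p1 * (l * q2) - l * p2 * (l * q1)) / r) := by
    simp only [CMI.normalVec, CMI.dX, toF, cross3, fromF, hP, hQ, hA, hB, hlE,
      Matrix.cons_val_zero, Matrix.cons_val_one, Matrix.head_cons, Matrix.cons_val_two,
      Matrix.tail_cons, Complex.add_re, Complex.add_im, Complex.mul_re, Complex.mul_im,
      Complex.I_re, Complex.I_im, Complex.ofReal_re, Complex.ofReal_im, mul_zero, mul_one,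
      zero_mul, sub_zero, zero_add, add_zero]
    rw [key_s, Real.sqrt_sq hr.le]
    simp only [Prod.mk.injEq, Complex.ext_iff, Complex.add_re, Complex.add_im, Complex.mul_re,
      Complex.mul_im, Complex.I_re, Complex.I_im, Complex.ofReal_re, Complex.ofReal_im,
      mul_zero, mul_one, zero_mul, sub_zero, add_zero, zero_add, div_div]
    refine ⟨⟨?_, ?_⟩, ?_⟩ <;> first | rfl | trivial
  have hnu : K.nu z = (l * p1 * (l * q2) - l * p2 * (l * q1)) / r := by rw [CMI.nu, hN]
  have hT : K.Tfield z = ((A / r : ℝ) : ℂ) + ((B / r : ℝ) : ℂ) * Complex.I := by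
    rw [CMI.Tfield, hA, hB, hrE]; push_cast; ring
  -- key algebraic identities
  have key2 : l * r * (A * p1 + B * q1) + (l * p1 * (l * q2) - l * p2 * (l * q1)) * (l * p2 * B - A * (l * q2)) = 0 := by
    linear_combination (l * (A * p1)) * hR1 + (l * (B * p1 + A * q1)) * hR2
      + (l * (B * q1 + A * p1)) * hM1
  have key3 : l * r * (A * p2 + B * q2) + (l * p1 * (l * q2) - l * p2 * (l * q1)) * (A * (l * q1) - l * p1 * B) = 0 := by
    linear_combination (l * (A * p2)) * hR1 + (l * (A * q2 + B * p2)) * hR2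
      + (l * (A * p2 + B * q2)) * hM1
  have key4 : r * (A ^ 2 + B ^ 2) + (l * p1 * (l * q2) - l * p2 * (l * q1)) ^ 2 = r ^ 2 := by
    linear_combination (A ^ 2 + B ^ 2 - r - (l ^ 2 * (p1 ^ 2 + p2 ^ 2) + A ^ 2)) * hM1
      + (-(l ^ 2 * (p1 ^ 2 + p2 ^ 2))) * hR1
      + (A * B - l ^ 2 * (p1 * q1 + p2 * q2)) * hR2
  constructor
  · -- the tangential-normal decomposition of ∂/∂t
    have e1 : A / r * p1 + B / r * q1 + (l * p1 * (l * q2) - l * p2 * (l * q1)) / r * ((l * p2 * B - A * (l * q2)) / (r * l)) = 0 := by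
      rw [show A / r * p1 + B / r * q1 + (l * p1 * (l * q2) - l * p2 * (l * q1)) / r * ((l * p2 * B - A * (l * q2)) / (r * l))
          = (l * r * (A * p1 + B * q1) + (l * p1 * (l * q2) - l * p2 * (l * q1)) * (l * p2 * B - A * (l * q2))) / (r ^ 2 * l) by
            field_simp, key2, zero_div]
    have e2 : A / r * p2 + B / r * q2 + (l * p1 * (l * q2) - l * p2 * (l * q1)) / r * ((A * (l * q1) - l * p1 * B) / (r * l)) = 0 := by
      rw [show A / r * p2 + B / r * q2 + (l * p1 * (l * q2) - l * p2 * (l * q1)) / r * ((A * (l * q1) - l * p1 * B) / (r * l))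
          = (l * r * (A * p2 + B * q2) + (l * p1 * (l * q2) - l * p2 * (l * q1)) * (A * (l * q1) - l * p1 * B)) / (r ^ 2 * l) by
            field_simp, key3, zero_div]
    have e3 : A / r * A + B / r * B + (l * p1 * (l * q2) - l * p2 * (l * q1)) / r * ((l * p1 * (l * q2) - l * p2 * (l * q1)) / r) = 1 := by
      rw [show A / r * A + B / r * B + (l * p1 * (l * q2) - l * p2 * (l * q1)) / r * ((l * p1 * (l * q2) - l * p2 * (l * q1)) / r)
          = (r * (A ^ 2 + B ^ 2) + (l * p1 * (l * q2) - l * p2 * (l * q1)) ^ 2) / r ^ 2 by field_simp, key4]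
      field_simp
    rw [CMI.dX, hT, hnu, hN, clm_decomp, clm_decomp, hP, hQ, hA, hB]
    simp only [Prod.smul_mk, Prod.mk_add_mk, Prod.mk.injEq]
    constructor
    · show (A / r) • ((p1 : ℂ) + (p2 : ℂ) * Complex.I)
          + (B / r) • ((q1 : ℂ) + (q2 : ℂ) * Complex.I)
          + ((l * p1 * (l * q2) - l * p2 * (l * q1)) / r) • ((((l * p2 * B - A * (l * q2)) / (r * l) : ℝ) : ℂ) + (((A * (l * q1) - l * p1 * B) / (r * l) : ℝ) : ℂ) * Complex.I)
          = 0
      rw [show (A / r) • ((p1 : ℂ) + (p2 : ℂ) * Complex.I)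
          + (B / r) • ((q1 : ℂ) + (q2 : ℂ) * Complex.I)
          + ((l * p1 * (l * q2) - l * p2 * (l * q1)) / r) • ((((l * p2 * B - A * (l * q2)) / (r * l) : ℝ) : ℂ) + (((A * (l * q1) - l * p1 * B) / (r * l) : ℝ) : ℂ) * Complex.I)
          = ((A / r * p1 + B / r * q1 + (l * p1 * (l * q2) - l * p2 * (l * q1)) / r * ((l * p2 * B - A * (l * q2)) / (r * l)) : ℝ) : ℂ)
            + ((A / r * p2 + B / r * q2 + (l * p1 * (l * q2) - l * p2 * (l * q1)) / r * ((A * (l * q1) - l * p1 * B) / (r * l)) : ℝ) : ℂ) * Complex.I by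
        simp only [Complex.real_smul]; push_cast; ring, e1, e2]
      simp
    · show (A / r) • A + (B / r) • B + (l * p1 * (l * q2) - l * p2 * (l * q1)) / r * ((l * p1 * (l * q2) - l * p2 * (l * q1)) / r) = 1
      rw [smul_eq_mul, smul_eq_mul]
      exact e3
  · -- injectivity of the differential transversally to the normal
    intro c v hv
    obtain ⟨x, y, hxy⟩ : ∃ a b : ℝ, v = (a : ℂ) + (b : ℂ) * Complex.I :=
      ⟨_, _, (Complex.re_add_im _).symm⟩
    rw [CMI.dX, hxy, clm_decomp, clm_decomp, hP, hQ, hA, hB, hN] at hv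
    simp only [Prod.smul_mk, Prod.mk.injEq] at hv
    obtain ⟨hv1, hv2⟩ := hv
    have hv1' : ((x * p1 + y * q1 : ℝ) : ℂ) + ((x * p2 + y * q2 : ℝ) : ℂ) * Complex.I
        = ((c * ((l * p2 * B - A * (l * q2)) / (r * l)) : ℝ) : ℂ) + ((c * ((A * (l * q1) - l * p1 * B) / (r * l)) : ℝ) : ℂ) * Complex.I := by
      calc ((x * p1 + y * q1 : ℝ) : ℂ) + ((x * p2 + y * q2 : ℝ) : ℂ) * Complex.I
          = x • ((p1 : ℂ) + (p2 : ℂ) * Complex.I) + y • ((q1 : ℂ) + (q2 : ℂ) * Complex.I) := by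
            simp only [Complex.real_smul]; push_cast; ring
        _ = c • ((((l * p2 * B - A * (l * q2)) / (r * l) : ℝ) : ℂ) + (((A * (l * q1) - l * p1 * B) / (r * l) : ℝ) : ℂ) * Complex.I) := hv1
        _ = _ := by simp only [Complex.real_smul]; push_cast; ring
    obtain ⟨E1, E2⟩ := mk_eq_mk hv1'
    have E3 : x * A + y * B = c * ((l * p1 * (l * q2) - l * p2 * (l * q1)) / r) := by
      rw [show x * A + y * B = x • A + y • B by simp [smul_eq_mul]]
      rw [hv2]; simp [smul_eq_mul]
    have E1' : (x * p1 + y * q1) * (r * l) = c * (l * p2 * B - A * (l * q2)) := by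
      rw [E1]; field_simp
    have E2' : (x * p2 + y * q2) * (r * l) = c * (A * (l * q1) - l * p1 * B) := by
      rw [E2]; field_simp
    have E3' : (x * A + y * B) * r = c * (l * p1 * (l * q2) - l * p2 * (l * q1)) := by
      rw [E3]; field_simp
    have hx : x * r ^ 2 = 0 := by
        linear_combination (l * p1) * E1' + (l * p2) * E2' + A * E3'
        + (x * r) * hM1 + (-(r * y)) * hR2
    have hy : y * r ^ 2 = 0 := by
        linear_combination (l * q1) * E1' + (l * q2) * E2' + B * E3'
        + (-(r * x)) * hR2 + (r * y) * hR1 + (r * y) * hM1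
    have hx0 : x = 0 := by
      rcases mul_eq_zero.mp hx with h | h
      · exact h
      · exact absurd h (pow_ne_zero _ hr.ne')
    have hy0 : y = 0 := by
      rcases mul_eq_zero.mp hy with h | h
      · exact h
      · exact absurd h (pow_ne_zero _ hr.ne')
    rw [hxy, hx0, hy0]; simp

end ConjugateAux

/-- If `X* = (φ*, h*)` is the conjugate immersion of the conformal
minimal immersion `X = (φ, h)`, then `h*` is the real harmonic conjugate of `h`
(Cauchy-Riemann equations) and the Hopf differential of `φ*` is `Q_{φ*} = -Q_φ`. -/
theorem conjugate_height_harmonic_conjugate_and_hopf (U : Set ℂ)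
    (hU : IsConnected U) (hsc : SimplyConnectedSpace U)
    (F G : CMI U) (hFG : IsConjugatePair F G) :
    (∀ z ∈ U, fderiv ℝ G.h z 1 = -fderiv ℝ F.h z Complex.I ∧
        fderiv ℝ G.h z Complex.I = fderiv ℝ F.h z 1) ∧
      ∀ z ∈ U, hopf G.φ z = -hopf F.φ z := by
  have CR : ∀ z ∈ U, fderiv ℝ G.h z 1 = -fderiv ℝ F.h z Complex.I ∧
      fderiv ℝ G.h z Complex.I = fderiv ℝ F.h z 1 := by
    intro z hz
    have key := hFG.2.2 z hz
    obtain ⟨dec, inj⟩ := cmi_key G hz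
    have hρ := hFG.1 z hz
    have hrF : 0 < rhoSq F.φ F.h z := F.immersion z hz
    have hsub : G.dX z (Complex.I * F.Tfield z - G.Tfield z)
        = (G.nu z - F.nu z) • G.normalVec z := by
      have hlin : G.dX z (Complex.I * F.Tfield z - G.Tfield z)
          = G.dX z (Complex.I * F.Tfield z) - G.dX z (G.Tfield z) := by
        simp [CMI.dX, Prod.mk_sub_mk]
      rw [hlin, eq_sub_of_add_eq key, eq_sub_of_add_eq dec, sub_smul]
      abel
    have hT : Complex.I * F.Tfield z = G.Tfield z :=
      sub_eq_zero.mp (inj _ _ hsub)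
    rw [CMI.Tfield, CMI.Tfield, hρ] at hT
    have hr0 : ((rhoSq F.φ F.h z : ℝ) : ℂ) ≠ 0 := by
      exact_mod_cast hrF.ne'
    have hT2 : Complex.I * (((fderiv ℝ F.h z 1 : ℝ) : ℂ)
          + ((fderiv ℝ F.h z Complex.I : ℝ) : ℂ) * Complex.I)
        = ((fderiv ℝ G.h z 1 : ℝ) : ℂ)
          + ((fderiv ℝ G.h z Complex.I : ℝ) : ℂ) * Complex.I := by
      have := congrArg (fun w : ℂ => w * ((rhoSq F.φ F.h z : ℝ) : ℂ)) hT
      simp only [div_mul_cancel₀ _ hr0, mul_assoc] at this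
      exact this
    have hmk : ((-fderiv ℝ F.h z Complex.I : ℝ) : ℂ)
          + ((fderiv ℝ F.h z 1 : ℝ) : ℂ) * Complex.I
        = ((fderiv ℝ G.h z 1 : ℝ) : ℂ)
          + ((fderiv ℝ G.h z Complex.I : ℝ) : ℂ) * Complex.I := by
      rw [← hT2]; push_cast
      linear_combination (-((fderiv ℝ F.h z Complex.I : ℝ) : ℂ)) * Complex.I_mul_I
    obtain ⟨h1, h2⟩ := mk_eq_mk hmk
    exact ⟨h1.symm, h2.symm⟩
  refine ⟨CR, fun z hz => ?_⟩
  have hdF : DifferentiableAt ℝ F.h z :=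
    (F.smooth_h.differentiableOn (by simp)).differentiableAt
      (F.opn.mem_nhds hz)
  have hdG : DifferentiableAt ℝ G.h z :=
    (G.smooth_h.differentiableOn (by simp)).differentiableAt
      (G.opn.mem_nhds hz)
  have hcF := F.conformal z hz
  have hcG := G.conformal z hz
  have hzDF : hzD F.h z = (((fderiv ℝ F.h z 1 : ℝ) : ℂ)
      - Complex.I * ((fderiv ℝ F.h z Complex.I : ℝ) : ℂ)) / 2 := by
    rw [hzD, wD, fderiv_ofReal_comp hdF 1, fderiv_ofReal_comp hdF Complex.I]
  have hzDG : hzD G.h z = (((fderiv ℝ G.h z 1 : ℝ) : ℂ)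
      - Complex.I * ((fderiv ℝ G.h z Complex.I : ℝ) : ℂ)) / 2 := by
    rw [hzD, wD, fderiv_ofReal_comp hdG 1, fderiv_ofReal_comp hdG Complex.I]
  obtain ⟨c1, c2⟩ := CR z hz
  have c1' : ((fderiv ℝ G.h z 1 : ℝ) : ℂ) = -((fderiv ℝ F.h z Complex.I : ℝ) : ℂ) := by
    rw [c1]; push_cast; ring
  have c2' : ((fderiv ℝ G.h z Complex.I : ℝ) : ℂ) = ((fderiv ℝ F.h z 1 : ℝ) : ℂ) := by
    rw [c2]
  rw [hzDG, c1', c2'] at hcG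
  rw [hzDF] at hcF
  linear_combination hcG + hcF
    + (-((((fderiv ℝ F.h z 1 : ℝ) : ℂ)) ^ 2 + (((fderiv ℝ F.h z Complex.I : ℝ) : ℂ)) ^ 2) / 4)
      * Complex.I_mul_I

end SaddleTowers
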